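/- Let G be a finite connected graph with set of blocks 𝓑. The graph of the polytope CBP(G) (vertices of CBP(G), adjacent when they form a polyhedral edge) has diameter at most |𝓑| = dim CBP(G): for every two vertices of CBP(G) there is a path between them along edges of the polytope traversing at most |𝓑| edges. -/

import Mathlib

open Set

noncomputable section

namespace ConnectedBlocksPaper

variable {V : Type} [Fintype V] [DecidableEq V]

/-- A subgraph is 2-connected: at least 3 vertices and removing any vertex keeps it connected. -/
def IsTwoConnectedSub (G : SimpleGraph V) (H : G.Subgraph) : Prop :=
  3 ≤ H.verts.ncard ∧ ∀ v ∈ H.verts, (H.deleteVerts {v}).Connected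

/-- A block of `G`: a maximal 2-connected subgraph, or a bridge together with its two
incident vertices. -/
def IsBlock (G : SimpleGraph V) (B : G.Subgraph) : Prop :=
  (IsTwoConnectedSub G B ∧ ∀ B' : G.Subgraph, IsTwoConnectedSub G B' → B ≤ B' → B' = B)
  ∨ (∃ (u v : V) (h : G.Adj u v), G.IsBridge s(u, v) ∧ B = G.subgraphOfAdj h)

/-- The set `𝓑` of blocks of `G`, as a type. -/
abbrev Block (G : SimpleGraph V) := {B : G.Subgraph // IsBlock G B}

/-- The subgraph `G[𝓐]` induced by a set of blocks. -/
def blockUnion (G : SimpleGraph V) (𝓐 : Set (Block G)) : G.Subgraph :=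
  ⨆ B ∈ 𝓐, (B : G.Subgraph)

/-- `G[𝓐]` is connected (the empty set of blocks counts as connected). -/
def ConnBlocks (G : SimpleGraph V) (𝓐 : Set (Block G)) : Prop :=
  𝓐 = ∅ ∨ (blockUnion G 𝓐).Connected

/-- The incidence vector `χ^𝓐 ∈ {0,1}^𝓑` of a set of blocks `𝓐 ⊆ 𝓑`. -/
def incVec (G : SimpleGraph V) (𝓐 : Set (Block G)) : Block G → ℝ :=
  Set.indicator 𝓐 1

/-- The connected blocks polytope `CBP(G) ⊆ ℝ^𝓑`. -/
def CBP (G : SimpleGraph V) : Set (Block G → ℝ) :=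
  convexHull ℝ {x | ∃ 𝓐 : Set (Block G), ConnBlocks G 𝓐 ∧ x = incVec G 𝓐}

/-- `F` is a face of the convex set `P`. -/
def IsFaceOf {E : Type*} [AddCommGroup E] [Module ℝ E] (P F : Set E) : Prop :=
  F ⊆ P ∧ Convex ℝ F ∧
    ∀ x ∈ P, ∀ y ∈ P, ∀ t : ℝ, 0 < t → t < 1 →
      t • x + (1 - t) • y ∈ F → x ∈ F ∧ y ∈ F

/-- The dimension of a polytope: the dimension of its affine hull. -/
def polyDim {E : Type*} [AddCommGroup E] [Module ℝ E] (P : Set E) : ℕ :=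
  Module.finrank ℝ (affineSpan ℝ P).direction

/-- A facet is a face of dimension `dim P - 1`. -/
def IsFacetOf {E : Type*} [AddCommGroup E] [Module ℝ E] (P F : Set E) : Prop :=
  IsFaceOf P F ∧ polyDim F = polyDim P - 1

/-- `v` is a cut vertex of `G`: deleting `v` from the connected graph `G` leaves more than
one component. -/
def IsCutVertex (G : SimpleGraph V) (v : V) : Prop :=
  ¬ (G.induce ({v}ᶜ : Set V)).Preconnected

/-- `𝓑⟨𝓐⟩`: the smallest set of blocks inducing a connected subgraph and containing `𝓐`. -/
def blockClosure (G : SimpleGraph V) (𝓐 : Set (Block G)) : Set (Block G) :=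
  ⋂₀ {𝓒 : Set (Block G) | 𝓐 ⊆ 𝓒 ∧ ConnBlocks G 𝓒}

/-- An independent set of blocks: no two blocks share a common vertex. -/
def IndepBlocks (G : SimpleGraph V) (𝓘 : Set (Block G)) : Prop :=
  ∀ B₁ ∈ 𝓘, ∀ B₂ ∈ 𝓘, B₁ ≠ B₂ →
    ((B₁ : G.Subgraph).verts ∩ (B₂ : G.Subgraph).verts) = ∅

/-- `(𝓘, α)` is an independent blocks inequality. -/
def IsIBI (G : SimpleGraph V) (𝓘 : Set (Block G)) (α : Block G → ℤ) : Prop :=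
  IndepBlocks G 𝓘 ∧
  (∀ B, B ∉ blockClosure G 𝓘 → α B = 0) ∧
  (∀ B ∈ 𝓘, α B = 1) ∧
  (∀ B ∈ blockClosure G 𝓘 \ 𝓘, α B ≤ 0) ∧
  (∑ᶠ B ∈ blockClosure G 𝓘 \ 𝓘, α B = -((𝓘.ncard : ℤ) - 1)) ∧
  (∀ I ⊆ 𝓘, ∑ᶠ B ∈ blockClosure G I \ 𝓘, α B ≤ -((I.ncard : ℤ) - 1))

/-- `𝓑[H]`: the set of blocks (of `G`) of the subgraph `H`. -/
def blocksOf (G : SimpleGraph V) (H : G.Subgraph) : Set (Block G) :=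
  {B : Block G | (B : G.Subgraph) ≤ H}

/-- `𝒦_v`: the components of `G - v` with `v` (and its incident edges) added back. -/
def Kv (G : SimpleGraph V) (v : V) : Set G.Subgraph :=
  {H | ∃ C : (G.induce ({v}ᶜ : Set V)).ConnectedComponent,
        H = (⊤ : G.Subgraph).induce (Subtype.val '' C.supp ∪ {v})}

/-- A polytope is simple if every vertex lies in exactly `dim P` facets. -/
def IsSimplePolytope {E : Type*} [AddCommGroup E] [Module ℝ E] (P : Set E) : Prop :=
  ∀ x ∈ P.extremePoints ℝ, {F : Set E | IsFacetOf P F ∧ x ∈ F}.ncard = polyDim P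

/-- A simplex: the convex hull of an affinely independent finite set. -/
def IsSimplex {E : Type*} [AddCommGroup E] [Module ℝ E] (F : Set E) : Prop :=
  ∃ s : Finset E, AffineIndependent ℝ ((↑) : s → E) ∧ F = convexHull ℝ (s : Set E)

/-- A polytope is simplicial if every facet is a simplex. -/
def IsSimplicialPolytope {E : Type*} [AddCommGroup E] [Module ℝ E] (P : Set E) : Prop :=
  ∀ F : Set E, IsFacetOf P F → IsSimplex F

/-- The graph of a polytope: extreme points, adjacent when they span a 1-dimensional face. -/
def polyGraph {E : Type*} [AddCommGroup E] [Module ℝ E] (P : Set E) : SimpleGraph E where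
  Adj x y := x ≠ y ∧ x ∈ P.extremePoints ℝ ∧ y ∈ P.extremePoints ℝ ∧
    IsFaceOf P (segment ℝ x y) ∧ polyDim (segment ℝ x y) = 1
  symm := by
    constructor
    rintro x y ⟨hxy, hx, hy, hF, hd⟩
    exact ⟨hxy.symm, hy, hx, by rwa [segment_symm], by rwa [segment_symm]⟩
  loopless := by constructor; rintro x ⟨h, -⟩; exact h rfl

/-! ### Graph-combinatorics layer -/

instance subgraphFinite (G : SimpleGraph V) : Finite G.Subgraph :=
  Finite.of_injective (fun H => (H.verts, H.Adj))
    (by rintro ⟨⟩ ⟨⟩ h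
        simp only [Prod.mk.injEq] at h
        congr
        · exact h.1
        · exact h.2)

instance blockFinite (G : SimpleGraph V) : Finite (Block G) := Subtype.finite

/-- The intersection graph of a set of blocks. -/
def linkGraph (G : SimpleGraph V) (𝓐 : Set (Block G)) : SimpleGraph (Block G) where
  Adj B₁ B₂ := B₁ ≠ B₂ ∧ B₁ ∈ 𝓐 ∧ B₂ ∈ 𝓐 ∧
    ((B₁ : G.Subgraph).verts ∩ (B₂ : G.Subgraph).verts).Nonempty
  symm := by
    constructor
    rintro B₁ B₂ ⟨h1, h2, h3, h4⟩
    exact ⟨h1.symm, h3, h2, by rwa [Set.inter_comm]⟩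
  loopless := by constructor; rintro B ⟨h, -⟩; exact h rfl

/-- A set of blocks is linked if its intersection graph is connected. -/
def Linked (G : SimpleGraph V) (𝓐 : Set (Block G)) : Prop :=
  ∀ B₁ ∈ 𝓐, ∀ B₂ ∈ 𝓐, (linkGraph G 𝓐).Reachable B₁ B₂

lemma linkGraph_mono (G : SimpleGraph V) {𝓐 𝓑 : Set (Block G)} (h : 𝓐 ⊆ 𝓑) :
    linkGraph G 𝓐 ≤ linkGraph G 𝓑 := by
  rintro B₁ B₂ ⟨h1, h2, h3, h4⟩
  exact ⟨h1, h h2, h h3, h4⟩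

lemma block_connected {G : SimpleGraph V} (B : Block G) : (B : G.Subgraph).Connected := by
  obtain ⟨⟨hcard, hdel⟩, -⟩ | ⟨u, v, h, -, hB⟩ := B.2
  · rw [SimpleGraph.Subgraph.connected_iff]
    have hne : (B : G.Subgraph).verts.Nonempty := by
      rw [Set.nonempty_iff_ne_empty]
      intro h0
      simp [h0, Set.ncard_empty] at hcard
    refine ⟨?_, hne⟩
    rw [SimpleGraph.Subgraph.preconnected_iff]
    rintro ⟨a, ha⟩ ⟨b, hb⟩
    have : ¬ (B : G.Subgraph).verts ⊆ {a, b} := by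
      intro hsub
      have h1 := Set.ncard_le_ncard hsub (Set.toFinite _)
      have h2 : ({a, b} : Set V).ncard ≤ 2 :=
        (Set.ncard_insert_le _ _).trans (by simp)
      omega
    obtain ⟨c, hc, hcab⟩ := Set.not_subset.mp this
    have hcon := hdel c hc
    have hda : a ∈ ((B : G.Subgraph).deleteVerts {c}).verts := by
      simp only [SimpleGraph.Subgraph.deleteVerts_verts, Set.mem_diff, Set.mem_singleton_iff]
      exact ⟨ha, fun hac => hcab (by simp [hac.symm])⟩
    have hdb : b ∈ ((B : G.Subgraph).deleteVerts {c}).verts := by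
      simp only [SimpleGraph.Subgraph.deleteVerts_verts, Set.mem_diff, Set.mem_singleton_iff]
      exact ⟨hb, fun hbc => hcab (by simp [hbc.symm])⟩
    have hr := hcon.coe ⟨a, hda⟩ ⟨b, hdb⟩
    exact hr.map (SimpleGraph.Subgraph.inclusion SimpleGraph.Subgraph.deleteVerts_le)
  · rw [hB]; exact SimpleGraph.Subgraph.subgraphOfAdj_connected h

lemma block_verts_nonempty {G : SimpleGraph V} (B : Block G) :
    (B : G.Subgraph).verts.Nonempty := (block_connected B).nonempty

lemma le_blockUnion {G : SimpleGraph V} {𝓐 : Set (Block G)} {B : Block G} (hB : B ∈ 𝓐) :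
    (B : G.Subgraph) ≤ blockUnion G 𝓐 :=
  le_biSup _ hB

lemma blockUnion_verts {G : SimpleGraph V} (𝓐 : Set (Block G)) :
    (blockUnion G 𝓐).verts = ⋃ B ∈ 𝓐, (B : G.Subgraph).verts := by
  simp [blockUnion, SimpleGraph.Subgraph.verts_iSup]

lemma blockUnion_adj {G : SimpleGraph V} {𝓐 : Set (Block G)} {a b : V} :
    (blockUnion G 𝓐).Adj a b ↔ ∃ B ∈ 𝓐, (B : G.Subgraph).Adj a b := by
  simp [blockUnion, SimpleGraph.Subgraph.iSup_adj]

lemma mem_blockUnion_verts {G : SimpleGraph V} {𝓐 : Set (Block G)} {B : Block G}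
    (hB : B ∈ 𝓐) {u : V} (hu : u ∈ (B : G.Subgraph).verts) :
    u ∈ (blockUnion G 𝓐).verts := by
  rw [blockUnion_verts]; exact Set.mem_biUnion hB hu

/-- reach inside a single block, transported to the union. -/
lemma reach_in_union {G : SimpleGraph V} {𝓐 : Set (Block G)} {B : Block G} (hB : B ∈ 𝓐)
    (x y : (blockUnion G 𝓐).verts) (hx : x.1 ∈ (B : G.Subgraph).verts)
    (hy : y.1 ∈ (B : G.Subgraph).verts) : (blockUnion G 𝓐).coe.Reachable x y := by
  have h := (block_connected B).coe ⟨x.1, hx⟩ ⟨y.1, hy⟩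
  have h2 := h.map (SimpleGraph.Subgraph.inclusion (le_blockUnion hB))
  convert h2 using 1 <;> exact Subtype.ext rfl

/-- Lemma A: a nonempty linked set of blocks has connected union. -/
lemma Linked.connected {G : SimpleGraph V} {𝓐 : Set (Block G)} (hne : 𝓐.Nonempty)
    (hL : Linked G 𝓐) : (blockUnion G 𝓐).Connected := by
  have key : ∀ (B C : Block G) (_ : (linkGraph G 𝓐).Walk B C) (_ : B ∈ 𝓐)
      (x y : (blockUnion G 𝓐).verts), x.1 ∈ (B : G.Subgraph).verts →
      y.1 ∈ (C : G.Subgraph).verts → (blockUnion G 𝓐).coe.Reachable x y := by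
    intro B C p
    induction p with
    | nil => intro hB x y hx hy; exact reach_in_union hB x y hx hy
    | cons h p ih =>
      intro hB x y hx hy
      obtain ⟨-, -, hB₁, z, hz₁, hz₂⟩ := h
      have hzu : z ∈ (blockUnion G 𝓐).verts := mem_blockUnion_verts hB₁ hz₂
      exact (reach_in_union hB x ⟨z, hzu⟩ hx hz₁).trans (ih hB₁ ⟨z, hzu⟩ y hz₂ hy)
  rw [SimpleGraph.Subgraph.connected_iff]
  constructor
  · rw [SimpleGraph.Subgraph.preconnected_iff]
    rintro x y
    have hx' : x.1 ∈ ⋃ B ∈ 𝓐, (B : G.Subgraph).verts := by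
      rw [← blockUnion_verts]; exact x.2
    have hy' : y.1 ∈ ⋃ B ∈ 𝓐, (B : G.Subgraph).verts := by
      rw [← blockUnion_verts]; exact y.2
    obtain ⟨B, hB, hxB⟩ := Set.mem_iUnion₂.mp hx'
    obtain ⟨C, hC, hyC⟩ := Set.mem_iUnion₂.mp hy'
    obtain ⟨p⟩ := hL B hB C hC
    exact key B C p hB x y hxB hyC
  · obtain ⟨B, hB⟩ := hne
    obtain ⟨u, hu⟩ := block_verts_nonempty B
    exact ⟨u, mem_blockUnion_verts hB hu⟩

/-- Lemma B: connected union implies linked. -/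
lemma connected_linked {G : SimpleGraph V} {𝓐 : Set (Block G)}
    (h : (blockUnion G 𝓐).Connected) : Linked G 𝓐 := by
  have key : ∀ (x y : (blockUnion G 𝓐).verts) (_ : (blockUnion G 𝓐).coe.Walk x y)
      (B : Block G), B ∈ 𝓐 → x.1 ∈ (B : G.Subgraph).verts →
      ∀ C ∈ 𝓐, y.1 ∈ (C : G.Subgraph).verts → (linkGraph G 𝓐).Reachable B C := by
    intro x y p
    induction p with
    | nil =>
      intro B hB hx C hC hy
      by_cases hBC : B = C
      · exact hBC ▸ SimpleGraph.Reachable.refl B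
      · exact SimpleGraph.Adj.reachable ⟨hBC, hB, hC, _, hx, hy⟩
    | @cons a b c h p ih =>
      intro B hB hx C hC hy
      have hadj : (blockUnion G 𝓐).Adj a.1 b.1 := h
      obtain ⟨B₀, hB₀, hB₀adj⟩ := blockUnion_adj.mp hadj
      have hb : b.1 ∈ (B₀ : G.Subgraph).verts := hB₀adj.snd_mem
      have ha : a.1 ∈ (B₀ : G.Subgraph).verts := hB₀adj.fst_mem
      have h1 : (linkGraph G 𝓐).Reachable B B₀ := by
        by_cases hBB : B = B₀
        · exact hBB ▸ SimpleGraph.Reachable.refl B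
        · exact SimpleGraph.Adj.reachable ⟨hBB, hB, hB₀, _, hx, ha⟩
      exact h1.trans (ih B₀ hB₀ hb C hC hy)
  intro B hB C hC
  obtain ⟨u, hu⟩ := block_verts_nonempty B
  obtain ⟨w, hw⟩ := block_verts_nonempty C
  obtain ⟨p⟩ := h.preconnected.coe ⟨u, mem_blockUnion_verts hB hu⟩ ⟨w, mem_blockUnion_verts hC hw⟩
  exact key _ _ p B hB hu C hC hw

lemma ConnBlocks.linked {G : SimpleGraph V} {𝓐 : Set (Block G)} (h : ConnBlocks G 𝓐) :
    Linked G 𝓐 := by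
  rcases h with h | h
  · intro B hB; simp [h] at hB
  · exact connected_linked h

lemma Linked.connBlocks {G : SimpleGraph V} {𝓐 : Set (Block G)} (h : Linked G 𝓐) :
    ConnBlocks G 𝓐 := by
  rcases Set.eq_empty_or_nonempty 𝓐 with he | hne
  · exact Or.inl he
  · exact Or.inr (h.connected hne)

lemma exists_removable_aux {G : SimpleGraph V} {𝓐 S : Set (Block G)} (hS : S ⊆ 𝓐)
    (hA : Linked G 𝓐) (hSL : Linked G S) (hSne : S.Nonempty) (hne : (𝓐 \ S).Nonempty) :
    ∃ B ∈ 𝓐 \ S, Linked G (𝓐 \ {B}) := by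
  classical
  set LG := linkGraph G 𝓐 with hLG
  set d : Block G → ℕ := fun u => sInf ((fun s => LG.dist u s) '' S) with hd
  have dmem : ∀ u, d u ∈ (fun s => LG.dist u s) '' S :=
    fun u => Nat.sInf_mem (hSne.image _)
  have dle : ∀ u, ∀ s ∈ S, d u ≤ LG.dist u s := fun u s hs => Nat.sInf_le ⟨s, hs, rfl⟩
  have dpos : ∀ u ∈ 𝓐 \ S, 1 ≤ d u := by
    intro u hu
    obtain ⟨s, hs, hds⟩ := dmem u
    have hds' : LG.dist u s = d u := hds
    rcases Nat.eq_zero_or_pos (LG.dist u s) with h0 | h1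
    · have hr : LG.Reachable u s := hA u hu.1 s (hS hs)
      have := (hr.dist_eq_zero_iff).mp h0
      exact absurd (this ▸ hs) hu.2
    · omega
  obtain ⟨v, hv, hvmax⟩ := Finset.exists_max_image (Set.toFinite 𝓐).toFinset d
    (by obtain ⟨u, hu⟩ := hne; exact ⟨u, (Set.Finite.mem_toFinset _).2 hu.1⟩)
  rw [Set.Finite.mem_toFinset] at hv
  have hvmax' : ∀ u ∈ 𝓐, d u ≤ d v := fun u hu => hvmax u ((Set.Finite.mem_toFinset _).2 hu)
  have hvS : v ∉ S := by
    intro hvs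
    have h1 : d v = 0 := Nat.le_zero.mp ((dle v v hvs).trans (by simp [SimpleGraph.dist_self]))
    obtain ⟨u, hu⟩ := hne
    have h2 := dpos u hu
    have h3 := hvmax' u hu.1
    omega
  have reachS : ∀ n, ∀ u ∈ 𝓐, u ≠ v → d u ≤ n →
      ∃ s ∈ S, (linkGraph G (𝓐 \ {v})).Reachable u s := by
    intro n
    induction n with
    | zero =>
      intro u hu hunv h0
      obtain ⟨s, hs, hds⟩ := dmem u
      have hds' : LG.dist u s = d u := hds
      have hz : LG.dist u s = 0 := by omega
      have hr : LG.Reachable u s := hA u hu s (hS hs)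
      have heq := hr.dist_eq_zero_iff.mp hz
      exact ⟨s, hs, heq ▸ SimpleGraph.Reachable.refl u⟩
    | succ n ih =>
      intro u hu hunv hdu
      by_cases huS : u ∈ S
      · exact ⟨u, huS, SimpleGraph.Reachable.refl u⟩
      · obtain ⟨s, hs, hds⟩ := dmem u
        have hds' : LG.dist u s = d u := hds
        have h1 : 1 ≤ d u := dpos u ⟨hu, huS⟩
        have hdist : LG.dist u s ≠ 0 := by omega
        obtain ⟨p, hp⟩ := SimpleGraph.exists_walk_of_dist_ne_zero hdist
        cases p with
        | nil => simp at hp; exact absurd hs huS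
        | @cons _ u₁ _ hadj q =>
          have hq : q.length = LG.dist u s - 1 := by
            simp only [SimpleGraph.Walk.length_cons] at hp; omega
          have hd1 : LG.dist u₁ s ≤ LG.dist u s - 1 := by
            have := SimpleGraph.dist_le q; omega
          have hdu1 : d u₁ < d u := by
            have hle := dle u₁ s hs
            have hle' : d u₁ ≤ LG.dist u₁ s := hle
            omega
          have hu₁ : u₁ ∈ 𝓐 := hadj.2.2.1
          have hu₁v : u₁ ≠ v := by
            intro h; rw [h] at hdu1
            have := hvmax' u hu; omega
          obtain ⟨s', hs', hr⟩ := ih u₁ hu₁ hu₁v (by omega)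
          refine ⟨s', hs', SimpleGraph.Reachable.trans (SimpleGraph.Adj.reachable ?_) hr⟩
          exact ⟨hadj.1, ⟨hu, by simp [hunv]⟩, ⟨hu₁, by simp [hu₁v]⟩, hadj.2.2.2⟩
  refine ⟨v, ⟨hv, hvS⟩, ?_⟩
  intro B₁ hB₁ B₂ hB₂
  obtain ⟨s₁, hs₁, hr₁⟩ := reachS (d B₁) B₁ hB₁.1 (by simpa using hB₁.2) le_rfl
  obtain ⟨s₂, hs₂, hr₂⟩ := reachS (d B₂) B₂ hB₂.1 (by simpa using hB₂.2) le_rfl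
  have hmid : (linkGraph G (𝓐 \ {v})).Reachable s₁ s₂ := by
    refine (hSL s₁ hs₁ s₂ hs₂).mono (linkGraph_mono G ?_)
    intro x hx
    exact ⟨hS hx, by simp; intro h; exact hvS (h ▸ hx)⟩
  exact hr₁.trans (hmid.trans hr₂.symm)

lemma linked_singleton {G : SimpleGraph V} (B : Block G) : Linked G {B} := by
  intro x hx y hy
  simp only [Set.mem_singleton_iff] at hx hy
  subst hx; subst hy
  exact SimpleGraph.Reachable.refl _

lemma linked_empty {G : SimpleGraph V} : Linked G (∅ : Set (Block G)) := by
  intro x hx; simp at hx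

lemma exists_removable {G : SimpleGraph V} {𝓐 S : Set (Block G)} (hS : S ⊆ 𝓐)
    (hA : Linked G 𝓐) (hSL : Linked G S) (hne : (𝓐 \ S).Nonempty) :
    ∃ B ∈ 𝓐 \ S, Linked G (𝓐 \ {B}) := by
  rcases Set.eq_empty_or_nonempty S with rfl | hSne
  · obtain ⟨B₀, hB₀⟩ := hne
    by_cases h1 : 𝓐 ⊆ {B₀}
    · refine ⟨B₀, hB₀, ?_⟩
      have hemp : 𝓐 \ {B₀} = ∅ := by
        ext x
        simp only [Set.mem_diff, Set.mem_singleton_iff, Set.mem_empty_iff_false, iff_false,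
          not_and, not_not]
        intro hx; exact h1 hx
      rw [hemp]; exact linked_empty
    · obtain ⟨s₀, hs₀, hs₀ne⟩ := Set.not_subset.mp h1
      have hsub : ({s₀} : Set (Block G)) ⊆ 𝓐 := by simpa using hs₀
      obtain ⟨B, hB, hL⟩ := exists_removable_aux hsub hA (linked_singleton s₀) ⟨s₀, rfl⟩
        ⟨B₀, hB₀.1, by simp only [Set.mem_singleton_iff]; intro h; exact hs₀ne (by simp [h.symm])⟩
      exact ⟨B, ⟨hB.1, by simp⟩, hL⟩
  · exact exists_removable_aux hS hA hSL hSne hne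

lemma exists_addable {G : SimpleGraph V} {𝓐 𝓐' : Set (Block G)} (hA : Linked G 𝓐)
    (hA' : Linked G 𝓐') (hint : (𝓐 ∩ 𝓐').Nonempty) (hdiff : (𝓐' \ 𝓐).Nonempty) :
    ∃ B ∈ 𝓐' \ 𝓐, Linked G (insert B 𝓐) := by
  obtain ⟨s, hs⟩ := hint
  obtain ⟨t, ht⟩ := hdiff
  obtain ⟨p⟩ := hA' s hs.2 t ht.1
  have key : ∀ (x y : Block G) (_ : (linkGraph G 𝓐').Walk x y), x ∈ 𝓐 → y ∉ 𝓐 →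
      ∃ B ∈ 𝓐' \ 𝓐, ∃ A ∈ 𝓐, ((A : G.Subgraph).verts ∩ (B : G.Subgraph).verts).Nonempty := by
    intro x y p
    induction p with
    | nil => intro hx hy; exact absurd hx hy
    | @cons a b c h q ih =>
      intro hx hy
      by_cases hb : b ∈ 𝓐
      · exact ih hb hy
      · exact ⟨b, ⟨h.2.2.1, hb⟩, a, hx, h.2.2.2⟩
  obtain ⟨B, hB, A, hA₀, hAB⟩ := key s t p hs.1 ht.2
  refine ⟨B, hB, ?_⟩
  intro B₁ hB₁ B₂ hB₂
  have hmono := linkGraph_mono G (Set.subset_insert B 𝓐)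
  have hBA : (linkGraph G (insert B 𝓐)).Reachable B A := by
    by_cases h : B = A
    · exact h ▸ SimpleGraph.Reachable.refl B
    · exact SimpleGraph.Adj.reachable
        ⟨h, Set.mem_insert _ _, Set.mem_insert_of_mem _ hA₀, by rwa [Set.inter_comm]⟩
  have hre : ∀ C ∈ insert B 𝓐, (linkGraph G (insert B 𝓐)).Reachable C A := by
    intro C hC
    rcases hC with rfl | hC
    · exact hBA
    · exact (hA C hC A hA₀).mono hmono
  exact (hre B₁ hB₁).trans (hre B₂ hB₂).symm

/-! ### Convex geometry layer -/

open scoped Classical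

attribute [local instance] Fintype.ofFinite

lemma incVec_apply {G : SimpleGraph V} (𝓐 : Set (Block G)) (B : Block G) :
    incVec G 𝓐 B = if B ∈ 𝓐 then 1 else 0 := by
  simp [incVec, Set.indicator_apply]

lemma incVec_inj {G : SimpleGraph V} {𝓐 𝓑 : Set (Block G)}
    (h : incVec G 𝓐 = incVec G 𝓑) : 𝓐 = 𝓑 := by
  ext B
  have := congrFun h B
  rw [incVec_apply, incVec_apply] at this
  by_cases h1 : B ∈ 𝓐 <;> by_cases h2 : B ∈ 𝓑 <;> simp [h1, h2] at this ⊢ <;> tauto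

lemma gens_subset_box (G : SimpleGraph V) :
    {x | ∃ 𝓐 : Set (Block G), ConnBlocks G 𝓐 ∧ x = incVec G 𝓐} ⊆
      Set.univ.pi fun _ : Block G => Set.Icc (0:ℝ) 1 := by
  rintro x ⟨𝓐, -, rfl⟩ B -
  rw [incVec_apply]
  by_cases h : B ∈ 𝓐 <;> simp [h]

lemma CBP_subset_box (G : SimpleGraph V) :
    CBP G ⊆ Set.univ.pi fun _ : Block G => Set.Icc (0:ℝ) 1 :=
  convexHull_min (gens_subset_box G) (convex_pi fun _ _ => convex_Icc 0 1)

lemma gen_mem_CBP {G : SimpleGraph V} {𝓐 : Set (Block G)} (h : ConnBlocks G 𝓐) :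
    incVec G 𝓐 ∈ CBP G :=
  subset_convexHull ℝ _ ⟨𝓐, h, rfl⟩

lemma aux_combo {a b p q c : ℝ} (ha : 0 < a) (hb : 0 < b) (hab : a + b = 1)
    (hp0 : 0 ≤ p) (hp1 : p ≤ 1) (hq0 : 0 ≤ q) (hq1 : q ≤ 1)
    (hc : c = 0 ∨ c = 1) (h : a * p + b * q = c) : p = c ∧ q = c := by
  rcases hc with rfl | rfl
  · constructor <;> nlinarith
  · constructor <;> nlinarith

lemma gen_extreme {G : SimpleGraph V} {𝓐 : Set (Block G)} (h : ConnBlocks G 𝓐) :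
    incVec G 𝓐 ∈ (CBP G).extremePoints ℝ := by
  rw [mem_extremePoints]
  refine ⟨gen_mem_CBP h, fun x₁ hx₁ x₂ hx₂ hseg => ?_⟩
  obtain ⟨a, b, ha, hb, hab, heq⟩ := hseg
  have key : ∀ B : Block G, x₁ B = incVec G 𝓐 B ∧ x₂ B = incVec G 𝓐 B := by
    intro B
    have h1 := CBP_subset_box G hx₁ B (Set.mem_univ B)
    have h2 := CBP_subset_box G hx₂ B (Set.mem_univ B)
    have hc : incVec G 𝓐 B = 0 ∨ incVec G 𝓐 B = 1 := by
      rw [incVec_apply]; by_cases hB : B ∈ 𝓐 <;> simp [hB]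
    have heqB : a * x₁ B + b * x₂ B = incVec G 𝓐 B := by
      have := congrFun heq B; simpa using this
    exact aux_combo ha hb hab h1.1 h1.2 h2.1 h2.2 hc heqB
  constructor <;> [skip; skip] <;> funext B
  · exact (key B).1
  · exact (key B).2

/-- The linear functional used to expose the edge between `χ^𝓒` and `χ^(insert B 𝓒)`. -/
def edgeFun {G : SimpleGraph V} (𝓒 : Set (Block G)) (B : Block G) : (Block G → ℝ) →ₗ[ℝ] ℝ where
  toFun x := ∑ A : Block G, (if A ∈ 𝓒 then (1:ℝ) else if A = B then 0 else -1) * x A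
  map_add' x y := by
    simp only [Pi.add_apply, mul_add]
    rw [Finset.sum_add_distrib]
  map_smul' r x := by
    simp only [Pi.smul_apply, smul_eq_mul, RingHom.id_apply]
    rw [Finset.mul_sum]
    congr 1; funext A; ring

lemma edgeFun_gen_le {G : SimpleGraph V} (𝓒 : Set (Block G)) (B : Block G)
    (𝓓 : Set (Block G)) :
    edgeFun 𝓒 B (incVec G 𝓓) ≤ ∑ A : Block G, (if A ∈ 𝓒 then (1:ℝ) else 0) := by
  apply Finset.sum_le_sum
  intro A _
  rw [incVec_apply]
  split_ifs <;> norm_num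

lemma edgeFun_gen_eq_iff {G : SimpleGraph V} {𝓒 : Set (Block G)} {B : Block G} (hB : B ∉ 𝓒)
    {𝓓 : Set (Block G)}
    (h : edgeFun 𝓒 B (incVec G 𝓓) = ∑ A : Block G, (if A ∈ 𝓒 then (1:ℝ) else 0)) :
    𝓓 = 𝓒 ∨ 𝓓 = insert B 𝓒 := by
  have hterm : ∀ A : Block G, A ∈ Finset.univ →
      (if A ∈ 𝓒 then (1:ℝ) else 0) -
        (if A ∈ 𝓒 then (1:ℝ) else if A = B then 0 else -1) * incVec G 𝓓 A = 0 := by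
    apply (Finset.sum_eq_zero_iff_of_nonneg ?_).mp
    · rw [Finset.sum_sub_distrib, sub_eq_zero]
      exact h.symm
    · intro A _
      rw [sub_nonneg, incVec_apply]
      split_ifs <;> norm_num
  have hsub1 : 𝓒 ⊆ 𝓓 := by
    intro A hA
    have := hterm A (Finset.mem_univ A)
    rw [incVec_apply] at this
    by_cases h2 : A ∈ 𝓓
    · exact h2
    · simp [hA, h2] at this
  have hsub2 : 𝓓 ⊆ insert B 𝓒 := by
    intro A hA
    by_cases h1 : A ∈ 𝓒
    · exact Set.mem_insert_of_mem _ h1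
    · by_cases h3 : A = B
      · exact h3 ▸ Set.mem_insert _ _
      · have := hterm A (Finset.mem_univ A)
        rw [incVec_apply] at this
        simp [h1, h3, hA] at this
  by_cases hBD : B ∈ 𝓓
  · right
    apply Set.Subset.antisymm hsub2
    intro A hA
    rcases hA with rfl | hA
    · exact hBD
    · exact hsub1 hA
  · left
    apply Set.Subset.antisymm _ hsub1
    intro A hA
    rcases hsub2 hA with rfl | h1
    · exact absurd hA hBD
    · exact h1

lemma edgeFun_le_on_CBP {G : SimpleGraph V} (𝓒 : Set (Block G)) (B : Block G) :
    ∀ x ∈ CBP G, edgeFun 𝓒 B x ≤ ∑ A : Block G, (if A ∈ 𝓒 then (1:ℝ) else 0) := by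
  apply convexHull_min
  · rintro x ⟨𝓓, -, rfl⟩
    exact edgeFun_gen_le 𝓒 B 𝓓
  · exact convex_halfSpace_le ⟨(edgeFun 𝓒 B).map_add, (edgeFun 𝓒 B).map_smul⟩ _

lemma edgeFun_left {G : SimpleGraph V} (𝓒 : Set (Block G)) (B : Block G) :
    edgeFun 𝓒 B (incVec G 𝓒) = ∑ A : Block G, (if A ∈ 𝓒 then (1:ℝ) else 0) := by
  apply Finset.sum_congr rfl
  intro A _
  rw [incVec_apply]
  by_cases h1 : A ∈ 𝓒 <;> simp [h1]

lemma edgeFun_right {G : SimpleGraph V} {𝓒 : Set (Block G)} {B : Block G} (hB : B ∉ 𝓒) :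
    edgeFun 𝓒 B (incVec G (insert B 𝓒)) = ∑ A : Block G, (if A ∈ 𝓒 then (1:ℝ) else 0) := by
  apply Finset.sum_congr rfl
  intro A _
  rw [incVec_apply]
  by_cases h1 : A ∈ 𝓒 <;> by_cases h3 : A = B <;>
    simp [h1, h3, Set.mem_insert_iff, hB]

lemma level_subset_segment {G : SimpleGraph V} {𝓒 : Set (Block G)} {B : Block G} (hB : B ∉ 𝓒) :
    ∀ x ∈ CBP G, edgeFun 𝓒 B x = (∑ A : Block G, (if A ∈ 𝓒 then (1:ℝ) else 0)) →
      x ∈ segment ℝ (incVec G 𝓒) (incVec G (insert B 𝓒)) := by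
  set M := ∑ A : Block G, (if A ∈ 𝓒 then (1:ℝ) else 0) with hM
  intro x hx hfx
  rw [CBP, convexHull_eq] at hx
  obtain ⟨ι, t, w, z, hw0, hw1, hz, hcm⟩ := hx
  rw [Finset.centerMass_eq_of_sum_1 _ _ hw1] at hcm
  have hfsum : edgeFun 𝓒 B x = ∑ i ∈ t, w i * edgeFun 𝓒 B (z i) := by
    rw [← hcm, map_sum]
    apply Finset.sum_congr rfl
    intro i _
    rw [map_smul, smul_eq_mul]
  have hgle : ∀ i ∈ t, edgeFun 𝓒 B (z i) ≤ M := by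
    intro i hi
    obtain ⟨𝓓, -, h𝓓⟩ := hz i hi
    rw [h𝓓, hM]
    exact edgeFun_gen_le 𝓒 B 𝓓
  have hterm : ∀ i ∈ t, w i * (M - edgeFun 𝓒 B (z i)) = 0 := by
    apply (Finset.sum_eq_zero_iff_of_nonneg ?_).mp
    · have : ∑ i ∈ t, w i * (M - edgeFun 𝓒 B (z i)) =
          (∑ i ∈ t, w i) * M - ∑ i ∈ t, w i * edgeFun 𝓒 B (z i) := by
        rw [Finset.sum_mul, ← Finset.sum_sub_distrib]
        apply Finset.sum_congr rfl
        intro i _; ring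
      rw [this, hw1, one_mul, ← hfsum, hfx]
      ring
    · intro i hi
      exact mul_nonneg (hw0 i hi) (sub_nonneg.2 (hgle i hi))
  set a := incVec G 𝓒 with ha
  set b := incVec G (insert B 𝓒) with hb
  set z' : ι → (Block G → ℝ) := fun i => if w i = 0 then a else z i with hz'
  have hz'mem : ∀ i ∈ t, z' i ∈ ({a, b} : Set (Block G → ℝ)) := by
    intro i hi
    by_cases h0 : w i = 0
    · simp [hz', h0]
    · have h1 := hterm i hi
      have h2 : edgeFun 𝓒 B (z i) = M := by
        rcases mul_eq_zero.mp h1 with h | h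
        · exact absurd h h0
        · linarith
      obtain ⟨𝓓, -, h𝓓⟩ := hz i hi
      rw [h𝓓] at h2
      have hzz : z' i = incVec G 𝓓 := by simp [hz', h0, h𝓓]
      simp only [Set.mem_insert_iff, Set.mem_singleton_iff]
      rcases edgeFun_gen_eq_iff hB h2 with h | h
      · exact Or.inl (by rw [hzz, h, ha])
      · exact Or.inr (by rw [hzz, h, hb])
  have hxeq : x = ∑ i ∈ t, w i • z' i := by
    rw [← hcm]
    apply Finset.sum_congr rfl
    intro i _
    by_cases h0 : w i = 0 <;> simp [hz', h0]
  rw [← convexHull_pair]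
  rw [hxeq, ← Finset.centerMass_eq_of_sum_1 _ _ hw1]
  exact Finset.centerMass_mem_convexHull _ hw0 (hw1 ▸ one_pos) hz'mem

lemma polyDim_segment {G : SimpleGraph V} {x y : Block G → ℝ} (hxy : x ≠ y) :
    polyDim (segment ℝ x y) = 1 := by
  have h1 : affineSpan ℝ (segment ℝ x y) = affineSpan ℝ {x, y} := by
    apply le_antisymm
    · rw [affineSpan_le]
      rw [← convexHull_pair]
      exact convexHull_subset_affineSpan _
    · apply affineSpan_mono
      intro p hp
      rcases (show p = x ∨ p = y by simpa using hp) with h | h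
      · rw [h]; exact left_mem_segment ℝ x y
      · rw [h]; exact right_mem_segment ℝ x y
  rw [polyDim, h1, direction_affineSpan, vectorSpan_pair]
  have : x -ᵥ y ≠ 0 := by
    simpa [vsub_eq_sub, sub_eq_zero] using hxy
  exact finrank_span_singleton this

/-- The edge of `CBP G` between `χ^𝓒` and `χ^(insert B 𝓒)`. -/
lemma edge_adj {G : SimpleGraph V} (𝓒 : Set (Block G)) (B : Block G) (hB : B ∉ 𝓒)
    (h1 : ConnBlocks G 𝓒) (h2 : ConnBlocks G (insert B 𝓒)) :
    (polyGraph (CBP G)).Adj (incVec G 𝓒) (incVec G (insert B 𝓒)) := by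
  set M := ∑ A : Block G, (if A ∈ 𝓒 then (1:ℝ) else 0) with hM
  have hne : incVec G 𝓒 ≠ incVec G (insert B 𝓒) := by
    intro h
    have := incVec_inj h
    exact hB (this ▸ Set.mem_insert B 𝓒)
  have hsegsub : segment ℝ (incVec G 𝓒) (incVec G (insert B 𝓒)) ⊆ CBP G :=
    (convex_convexHull ℝ _).segment_subset (gen_mem_CBP h1) (gen_mem_CBP h2)
  have hsegM : ∀ p ∈ segment ℝ (incVec G 𝓒) (incVec G (insert B 𝓒)), edgeFun 𝓒 B p = M := by
    rintro p ⟨u, v, hu, hv, huv, rfl⟩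
    rw [map_add, map_smul, map_smul, smul_eq_mul, smul_eq_mul, edgeFun_left,
      edgeFun_right hB, ← hM]
    linear_combination M * huv
  refine ⟨hne, gen_extreme h1, gen_extreme h2, ⟨hsegsub, convex_segment _ _, ?_⟩, ?_⟩
  · intro x hx y hy t ht0 ht1 hmem
    have hfx := edgeFun_le_on_CBP 𝓒 B x hx
    have hfy := edgeFun_le_on_CBP 𝓒 B y hy
    have hfm : edgeFun 𝓒 B (t • x + (1 - t) • y) = M := hsegM _ hmem
    rw [map_add, map_smul, map_smul, smul_eq_mul, smul_eq_mul] at hfm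
    have hfx' : edgeFun 𝓒 B x = M := by nlinarith
    have hfy' : edgeFun 𝓒 B y = M := by nlinarith
    exact ⟨level_subset_segment hB x hx hfx', level_subset_segment hB y hy hfy'⟩
  · exact polyDim_segment hne

lemma symmDiff_insert {G : SimpleGraph V} {𝓐 𝓐' : Set (Block G)} {B : Block G}
    (hB1 : B ∉ 𝓐) (hB2 : B ∈ 𝓐') :
    ((insert B 𝓐) \ 𝓐') ∪ (𝓐' \ insert B 𝓐) = ((𝓐 \ 𝓐') ∪ (𝓐' \ 𝓐)) \ {B} := by
  ext x
  by_cases hxB : x = B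
  · subst hxB
    simp only [Set.mem_union, Set.mem_diff, Set.mem_insert_iff, Set.mem_singleton_iff]
    tauto
  · simp only [Set.mem_union, Set.mem_diff, Set.mem_insert_iff, Set.mem_singleton_iff]
    tauto

lemma symmDiff_remove {G : SimpleGraph V} {𝓐 𝓐' : Set (Block G)} {B : Block G}
    (hB1 : B ∈ 𝓐) (hB2 : B ∉ 𝓐') :
    ((𝓐 \ {B}) \ 𝓐') ∪ (𝓐' \ (𝓐 \ {B})) = ((𝓐 \ 𝓐') ∪ (𝓐' \ 𝓐)) \ {B} := by
  ext x
  by_cases hxB : x = B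
  · subst hxB
    simp only [Set.mem_union, Set.mem_diff, Set.mem_singleton_iff]
    tauto
  · simp only [Set.mem_union, Set.mem_diff, Set.mem_singleton_iff]
    tauto

lemma main_walk {G : SimpleGraph V} :
    ∀ (n : ℕ) (𝓐 𝓐' : Set (Block G)), ConnBlocks G 𝓐 → ConnBlocks G 𝓐' →
    ((𝓐 \ 𝓐') ∪ (𝓐' \ 𝓐)).ncard ≤ n →
    ∃ w : (polyGraph (CBP G)).Walk (incVec G 𝓐) (incVec G 𝓐'), w.length ≤ n := by
  intro n
  induction n with
  | zero =>
    intro 𝓐 𝓐' h h' hcard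
    have hΔ : ((𝓐 \ 𝓐') ∪ (𝓐' \ 𝓐)) = ∅ :=
      Set.ncard_eq_zero (Set.toFinite _) |>.mp (Nat.le_zero.mp hcard)
    have heq : 𝓐 = 𝓐' := by
      ext x
      constructor <;> intro hx
      · by_contra hx'
        have : x ∈ ((𝓐 \ 𝓐') ∪ (𝓐' \ 𝓐)) := Or.inl ⟨hx, hx'⟩
        rw [hΔ] at this; exact this
      · by_contra hx'
        have : x ∈ ((𝓐 \ 𝓐') ∪ (𝓐' \ 𝓐)) := Or.inr ⟨hx, hx'⟩
        rw [hΔ] at this; exact this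
    subst heq
    exact ⟨SimpleGraph.Walk.nil, by simp⟩
  | succ n ih =>
    intro 𝓐 𝓐' h h' hcard
    by_cases heq : 𝓐 = 𝓐'
    · subst heq
      exact ⟨SimpleGraph.Walk.nil, by simp⟩
    · have hΔne : (((𝓐 \ 𝓐') ∪ (𝓐' \ 𝓐))).Nonempty := by
        rw [Set.nonempty_iff_ne_empty]
        intro h0
        apply heq
        ext x
        constructor <;> intro hx <;> by_contra hx'
        · have : x ∈ ((𝓐 \ 𝓐') ∪ (𝓐' \ 𝓐)) := Or.inl ⟨hx, hx'⟩
          rw [h0] at this; exact this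
        · have : x ∈ ((𝓐 \ 𝓐') ∪ (𝓐' \ 𝓐)) := Or.inr ⟨hx, hx'⟩
          rw [h0] at this; exact this
      have step : ∃ (𝓐₁ : Set (Block G)) (B : Block G), ConnBlocks G 𝓐₁ ∧
          (polyGraph (CBP G)).Adj (incVec G 𝓐) (incVec G 𝓐₁) ∧
          B ∈ ((𝓐 \ 𝓐') ∪ (𝓐' \ 𝓐)) ∧
          ((𝓐₁ \ 𝓐') ∪ (𝓐' \ 𝓐₁)) = ((𝓐 \ 𝓐') ∪ (𝓐' \ 𝓐)) \ {B} := by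
        rcases Set.eq_empty_or_nonempty (𝓐' \ 𝓐) with hd | hd
        · -- 𝓐' ⊆ 𝓐 : remove a block of 𝓐 \ 𝓐'
          have hsub : 𝓐' ⊆ 𝓐 := Set.diff_eq_empty.mp hd
          have hAne : (𝓐 \ 𝓐').Nonempty := by
            obtain ⟨x, hx⟩ := hΔne
            rcases hx with hx | hx
            · exact ⟨x, hx⟩
            · rw [hd] at hx; exact absurd hx (Set.notMem_empty x)
          obtain ⟨B, hB, hL⟩ := exists_removable hsub h.linked h'.linked hAne
          have hins : insert B (𝓐 \ {B}) = 𝓐 := by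
            rw [Set.insert_diff_singleton]
            exact Set.insert_eq_self.mpr hB.1
          have hadj := edge_adj (𝓐 \ {B}) B (by simp) hL.connBlocks (hins.symm ▸ h)
          rw [hins] at hadj
          exact ⟨𝓐 \ {B}, B, hL.connBlocks, hadj.symm, Or.inl hB,
            symmDiff_remove hB.1 hB.2⟩
        · rcases Set.eq_empty_or_nonempty (𝓐 ∩ 𝓐') with hi | hi
          · rcases Set.eq_empty_or_nonempty 𝓐 with rfl | hAne'
            · -- 𝓐 = ∅ : add any block of 𝓐'
              obtain ⟨B, hBd⟩ := hd
              have hL : Linked G (insert B (∅ : Set (Block G))) := by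
                intro x hx y hy
                simp only [Set.mem_insert_iff, Set.mem_empty_iff_false, or_false] at hx hy
                subst hx; subst hy
                exact SimpleGraph.Reachable.refl _
              have hadj := edge_adj (∅ : Set (Block G)) B (Set.notMem_empty B)
                (Or.inl rfl) hL.connBlocks
              exact ⟨insert B ∅, B, hL.connBlocks, hadj, Or.inr hBd,
                symmDiff_insert (Set.notMem_empty B) hBd.1⟩
            · -- 𝓐 nonempty and disjoint from 𝓐' : remove any removable block
              obtain ⟨B, hB, hL⟩ := exists_removable (Set.empty_subset 𝓐) h.linked
                linked_empty (by simpa using hAne')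
              have hB𝓐 : B ∈ 𝓐 := hB.1
              have hB𝓐' : B ∉ 𝓐' := by
                intro hx
                have : B ∈ 𝓐 ∩ 𝓐' := ⟨hB𝓐, hx⟩
                rw [hi] at this; exact this
              have hins : insert B (𝓐 \ {B}) = 𝓐 := by
                rw [Set.insert_diff_singleton]
                exact Set.insert_eq_self.mpr hB𝓐
              have hadj := edge_adj (𝓐 \ {B}) B (by simp) hL.connBlocks (hins.symm ▸ h)
              rw [hins] at hadj
              exact ⟨𝓐 \ {B}, B, hL.connBlocks, hadj.symm, Or.inl ⟨hB𝓐, hB𝓐'⟩,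
                symmDiff_remove hB𝓐 hB𝓐'⟩
          · -- crossing : add a block of 𝓐' \ 𝓐 touching 𝓐
            obtain ⟨B, hB, hL⟩ := exists_addable h.linked h'.linked hi hd
            have hadj := edge_adj 𝓐 B hB.2 h hL.connBlocks
            exact ⟨insert B 𝓐, B, hL.connBlocks, hadj, Or.inr hB,
              symmDiff_insert hB.2 hB.1⟩
      obtain ⟨𝓐₁, B, hconn₁, hadj, hBΔ, hΔeq⟩ := step
      have hcard' : ((𝓐₁ \ 𝓐') ∪ (𝓐' \ 𝓐₁)).ncard ≤ n := by
        rw [hΔeq]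
        have h1 := Set.ncard_diff_singleton_lt_of_mem hBΔ (Set.toFinite _)
        omega
      obtain ⟨w, hw⟩ := ih 𝓐₁ 𝓐' hconn₁ h' hcard'
      exact ⟨SimpleGraph.Walk.cons hadj w, by simp [SimpleGraph.Walk.length_cons]; omega⟩

/-- the graph of `CBP(G)` has diameter at most `|𝓑| = dim CBP(G)`. -/
theorem cbp_diameter (G : SimpleGraph V) (hG : G.Connected) :
    ∀ x ∈ (CBP G).extremePoints ℝ, ∀ y ∈ (CBP G).extremePoints ℝ,
      ∃ w : (polyGraph (CBP G)).Walk x y, w.length ≤ Nat.card (Block G) := by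
  intro x hx y hy
  have hx' : x ∈ {x | ∃ 𝓐 : Set (Block G), ConnBlocks G 𝓐 ∧ x = incVec G 𝓐} :=
    extremePoints_convexHull_subset hx
  have hy' : y ∈ {x | ∃ 𝓐 : Set (Block G), ConnBlocks G 𝓐 ∧ x = incVec G 𝓐} :=
    extremePoints_convexHull_subset hy
  obtain ⟨𝓐, h𝓐, rfl⟩ := hx'
  obtain ⟨𝓐', h𝓐', rfl⟩ := hy'
  apply main_walk (Nat.card (Block G)) 𝓐 𝓐' h𝓐 h𝓐'
  calc ((𝓐 \ 𝓐') ∪ (𝓐' \ 𝓐)).ncard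
      ≤ (Set.univ : Set (Block G)).ncard :=
        Set.ncard_le_ncard (Set.subset_univ _) Set.finite_univ
    _ = Nat.card (Block G) := Set.ncard_univ _

end ConnectedBlocksPaper
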